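/- The linear map sending an alternating 3-linear form J on ℝ⁴ to the 4-tuple of its transversal components (J(X⁽⁰⁾₁, X⁽⁰⁾₂, X⁽⁰⁾₃), J(X⁽¹⁾₁, X⁽¹⁾₂, X⁽¹⁾₃), J(X⁽²⁾₁, X⁽²⁾₂, X⁽²⁾₃), J(X⁽³⁾₁, X⁽³⁾₂, X⁽³⁾₃)) ∈ ℝ⁴ is a linear isomorphism from the space of alternating 3-forms on ℝ⁴ onto ℝ⁴. -/

import Mathlib

noncomputable section

/-- ℝ⁴, the Minkowski spacetime manifold. -/
abbrev V4 : Type := Fin 4 → ℝ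

/-- The standard basis e₀, e₁, e₂, e₃ of ℝ⁴. -/
def e (i : Fin 4) : V4 := Pi.single i 1

/-- Contravariant part Γ⁽μ⁾ of the frame μ: Γ⁽⁰⁾ = e₀ and, for j ∈ {1,2,3},
Γ⁽ʲ⁾ = γ e₀ + βγ e_j (boost along e_j). -/
def Γfr (β γ : ℝ) (μ : Fin 4) : V4 :=
  if μ = 0 then e 0 else γ • e 0 + (β * γ) • e μ

/-- Spatial vectors X⁽μ⁾ₖ (k = 1,2,3, indexed by `k : Fin 3` ↦ spatial index `k+1`):
for the fiducial frame X⁽⁰⁾ₖ = eₖ; for the frame boosted along e_j,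
X⁽ʲ⁾ⱼ = βγ e₀ + γ e_j and X⁽ʲ⁾ₖ = eₖ for k ≠ j. -/
def Xfr (β γ : ℝ) (μ : Fin 4) (k : Fin 3) : V4 :=
  if k.succ = μ then (β * γ) • e 0 + γ • e μ else e k.succ

/- ### auxiliary material -/


def didx : Fin 4 → Fin 3 → Fin 4 := ![![1,2,3], ![0,2,3], ![0,1,3], ![0,1,2]]

def ωi (i : Fin 4) : AlternatingMap ℝ V4 ℝ (Fin 3) :=
  (Matrix.detRowAlternating : (Fin 3 → ℝ) [⋀^Fin 3]→ₗ[ℝ] ℝ).compLinearMap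
    (LinearMap.funLeft ℝ ℝ (didx i))

lemma ωi_apply (i : Fin 4) (v : Fin 3 → V4) :
    ωi i v = Matrix.det (Matrix.of fun k l => v k (didx i l)) := rfl

def Tmap (β γ : ℝ) : AlternatingMap ℝ V4 ℝ (Fin 3) →ₗ[ℝ] (Fin 4 → ℝ) :=
  LinearMap.pi fun μ =>
    { toFun := fun J => J fun k => Xfr β γ μ k
      map_add' := fun _ _ => rfl
      map_smul' := fun _ _ => rfl }

lemma Tmap_apply (β γ : ℝ) (J : AlternatingMap ℝ V4 ℝ (Fin 3)) (μ : Fin 4) :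
    Tmap β γ J μ = J fun k => Xfr β γ μ k := rfl

lemma fam0 (β γ : ℝ) : (fun k => Xfr β γ 0 k) = ![e 1, e 2, e 3] := by
  funext k; fin_cases k <;> simp (config := { decide := true }) [Xfr] <;> rfl

lemma fam1 (β γ : ℝ) :
    (fun k => Xfr β γ 1 k) = ![(β * γ) • e 0 + γ • e 1, e 2, e 3] := by
  funext k; fin_cases k <;> simp (config := { decide := true }) [Xfr] <;> rfl

lemma fam2 (β γ : ℝ) :
    (fun k => Xfr β γ 2 k) = ![e 1, (β * γ) • e 0 + γ • e 2, e 3] := by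
  funext k; fin_cases k <;> simp (config := { decide := true }) [Xfr] <;> rfl

lemma fam3 (β γ : ℝ) :
    (fun k => Xfr β γ 3 k) = ![e 1, e 2, (β * γ) • e 0 + γ • e 3] := by
  funext k; fin_cases k <;> simp (config := { decide := true }) [Xfr] <;> rfl

lemma upd0 (x y z w : V4) : Function.update ![x, y, z] 0 w = ![w, y, z] := by
  funext i; fin_cases i <;> simp [Function.update]

lemma upd1 (x y z w : V4) : Function.update ![x, y, z] 1 w = ![x, w, z] := by
  funext i; fin_cases i <;> simp [Function.update]

lemma upd2 (x y z w : V4) : Function.update ![x, y, z] 2 w = ![x, y, w] := by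
  funext i; fin_cases i <;> simp [Function.update]

lemma swap01 (J : AlternatingMap ℝ V4 ℝ (Fin 3)) (x y z : V4) :
    J ![y, x, z] = -J ![x, y, z] := by
  have h : ![y, x, z] = ![x, y, z] ∘ Equiv.swap (0 : Fin 3) 1 := by
    funext i; fin_cases i <;> simp [Equiv.swap_apply_def]
  rw [h, AlternatingMap.map_swap _ _ (by decide)]

lemma swap12 (J : AlternatingMap ℝ V4 ℝ (Fin 3)) (x y z : V4) :
    J ![x, z, y] = -J ![x, y, z] := by
  have h : ![x, z, y] = ![x, y, z] ∘ Equiv.swap (1 : Fin 3) 2 := by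
    funext i; fin_cases i <;> simp [Equiv.swap_apply_def]
  rw [h, AlternatingMap.map_swap _ _ (by decide)]

lemma swap02 (J : AlternatingMap ℝ V4 ℝ (Fin 3)) (x y z : V4) :
    J ![z, y, x] = -J ![x, y, z] := by
  have h : ![z, y, x] = ![x, y, z] ∘ Equiv.swap (0 : Fin 3) 2 := by
    funext i; fin_cases i <;> simp [Equiv.swap_apply_def]
  rw [h, AlternatingMap.map_swap _ _ (by decide)]

lemma vanish (J : AlternatingMap ℝ V4 ℝ (Fin 3))
    (h012 : J ![e 0, e 1, e 2] = 0) (h013 : J ![e 0, e 1, e 3] = 0)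
    (h023 : J ![e 0, e 2, e 3] = 0) (h123 : J ![e 1, e 2, e 3] = 0)
    (a b c : Fin 4) (hab : a ≠ b) (hac : a ≠ c) (hbc : b ≠ c) :
    J ![e a, e b, e c] = 0 := by
  fin_cases a <;> fin_cases b <;> fin_cases c <;>
    first
      | exact (hab rfl).elim
      | exact (hac rfl).elim
      | exact (hbc rfl).elim
      | assumption
      | (rw [swap01]; simp only [neg_eq_zero]; assumption)
      | (rw [swap12]; simp only [neg_eq_zero]; assumption)
      | (rw [swap02]; simp only [neg_eq_zero]; assumption)
      | (rw [swap01, swap12]; simp only [neg_neg]; assumption)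
      | (rw [swap01, swap02]; simp only [neg_neg]; assumption)

/-- the linear map sending an alternating 3-form J on ℝ⁴ to the 4-tuple
of its transversal components in the four frames is a linear isomorphism onto ℝ⁴. -/
theorem transversal_components_linear_iso
    (β γ : ℝ) (hβ0 : 0 < β) (hβ1 : β < 1)
    (hγ : γ = (1 - β ^ 2) ^ (-(1 / 2) : ℝ)) :
    ∃ φ : AlternatingMap ℝ V4 ℝ (Fin 3) ≃ₗ[ℝ] (Fin 4 → ℝ),
      ∀ (J : AlternatingMap ℝ V4 ℝ (Fin 3)) (μ : Fin 4),
        φ J μ = J (fun k => Xfr β γ μ k) := by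
  have hγpos : 0 < γ := by
    rw [hγ]
    exact Real.rpow_pos_of_pos (by nlinarith) _
  have hβγ : β * γ ≠ 0 := by positivity
  have hinj : Function.Injective (Tmap β γ) := by
    rw [← LinearMap.ker_eq_bot, LinearMap.ker_eq_bot']
    intro J hJ
    have hc : ∀ μ, J (fun k => Xfr β γ μ k) = 0 := fun μ => congrFun hJ μ
    have h0 := hc 0; rw [fam0] at h0
    have h1 := hc 1; rw [fam1] at h1
    have h2 := hc 2; rw [fam2] at h2
    have h3 := hc 3; rw [fam3] at h3
    -- expand multilinearity
    have e1 : J ![(β * γ) • e 0 + γ • e 1, e 2, e 3]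
        = (β * γ) * J ![e 0, e 2, e 3] + γ * J ![e 1, e 2, e 3] := by
      rw [← upd0 (e 1) (e 2) (e 3), AlternatingMap.map_update_add,
        AlternatingMap.map_update_smul, AlternatingMap.map_update_smul, upd0, upd0,
        smul_eq_mul, smul_eq_mul]
    have e2 : J ![e 1, (β * γ) • e 0 + γ • e 2, e 3]
        = (β * γ) * J ![e 1, e 0, e 3] + γ * J ![e 1, e 2, e 3] := by
      rw [← upd1 (e 1) (e 2) (e 3), AlternatingMap.map_update_add,
        AlternatingMap.map_update_smul, AlternatingMap.map_update_smul, upd1, upd1,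
        smul_eq_mul, smul_eq_mul]
    have e3 : J ![e 1, e 2, (β * γ) • e 0 + γ • e 3]
        = (β * γ) * J ![e 1, e 2, e 0] + γ * J ![e 1, e 2, e 3] := by
      rw [← upd2 (e 1) (e 2) (e 3), AlternatingMap.map_update_add,
        AlternatingMap.map_update_smul, AlternatingMap.map_update_smul, upd2, upd2,
        smul_eq_mul, smul_eq_mul]
    rw [e1, h0, mul_zero, add_zero] at h1
    rw [e2, h0, mul_zero, add_zero] at h2
    rw [e3, h0, mul_zero, add_zero] at h3
    have z023 : J ![e 0, e 2, e 3] = 0 := by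
      rcases mul_eq_zero.mp h1 with h | h
      · exact absurd h hβγ
      · exact h
    have z103 : J ![e 1, e 0, e 3] = 0 := by
      rcases mul_eq_zero.mp h2 with h | h
      · exact absurd h hβγ
      · exact h
    have z120 : J ![e 1, e 2, e 0] = 0 := by
      rcases mul_eq_zero.mp h3 with h | h
      · exact absurd h hβγ
      · exact h
    have z013 : J ![e 0, e 1, e 3] = 0 := by
      rw [swap01] at z103; linarith [z103]
    have z012 : J ![e 0, e 1, e 2] = 0 := by
      rw [swap02, swap12] at z120; linarith [z120]
    apply (Pi.basisFun ℝ (Fin 4)).ext_alternating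
    intro v hv
    have hbe : ∀ i : Fin 4, (Pi.basisFun ℝ (Fin 4)) i = e i := by
      intro i; simp [e, Pi.basisFun_apply]
    have hfam : (fun i => (Pi.basisFun ℝ (Fin 4)) (v i)) = ![e (v 0), e (v 1), e (v 2)] := by
      funext i; fin_cases i <;> simp [hbe]
    rw [hfam]
    simp only [AlternatingMap.zero_apply]
    exact vanish J z012 z013 z023 h0 (v 0) (v 1) (v 2)
      (fun h => (by decide : (0:Fin 3) ≠ 1) (hv h))
      (fun h => (by decide : (0:Fin 3) ≠ 2) (hv h))
      (fun h => (by decide : (1:Fin 3) ≠ 2) (hv h))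
  have hsurj : Function.Surjective (Tmap β γ) := by
    intro c
    refine ⟨(c 0) • ωi 0 + ((c 1 - γ * c 0)/(β * γ)) • ωi 1
      + (-((c 2 - γ * c 0)/(β * γ))) • ωi 2 + ((c 3 - γ * c 0)/(β * γ)) • ωi 3, ?_⟩
    funext μ
    have h4 : ∀ x : Fin 4, x = 0 ∨ x = 1 ∨ x = 2 ∨ x = 3 := by decide
    rcases h4 μ with rfl | rfl | rfl | rfl <;>
      · rw [Tmap_apply]
        first
          | rw [fam0] | rw [fam1] | rw [fam2] | rw [fam3]
        simp only [AlternatingMap.add_apply, AlternatingMap.smul_apply, smul_eq_mul,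
          ωi_apply, Matrix.det_fin_three]
        simp (config := { decide := true }) only [e, didx, Pi.single_apply, Matrix.of_apply,
          Matrix.cons_val_zero, Matrix.cons_val_one, Matrix.head_cons, Matrix.cons_val_two,
          Matrix.tail_cons, Pi.add_apply, Pi.smul_apply, smul_eq_mul, ↓reduceIte]
        field_simp
        try ring
  exact ⟨LinearEquiv.ofBijective (Tmap β γ) ⟨hinj, hsurj⟩, fun J μ => rfl⟩
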